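/- Let w ∈ ℂ with 0 < |w| ≤ 1, Im w ≥ 0 and w ≠ −1, and set z := i(1 − w)/(1 + w), S := |z + i| and S₋ := |z − i|. Then S = 2/|1 + w| and S₋ = |w|·S, the quantities (S + S₋)² − 4 and 4 − (S − S₋)² are both nonnegative, and the Forgács–Horváth–Palla expressions T₁ := (1/(2S⁵))·√((S + S₋)² − 4)·( (1/4)·(4 − (S − S₋)²)² + S²S₋² − 3(z + z̄)² ) and T₂ := (1/(2S⁵))·√(4 − (S − S₋)²)·( (1/4)·(4 − (S + S₋)²)² + S²S₋² − 3(z + z̄)² ) satisfy T₁ = Im(w^{5/2}) and T₂ = Re(w^{5/2}), where w^{5/2} := exp((5/2)·Log w) is taken with the principal branch of the logarithm (argument in [0, π]). -/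

import Mathlib

open Complex ComplexConjugate

noncomputable section

/-- The conformal equivalence from the unit-disc model to the upper half-plane model:
z = i(1 − w)/(1 + w). -/
def z19 (w : ℂ) : ℂ := Complex.I * (1 - w) / (1 + w)

/-- S = |z + i|. -/
def S19 (w : ℂ) : ℝ := ‖z19 w + Complex.I‖

/-- S₋ = |z − i|. -/
def Sm19 (w : ℂ) : ℝ := ‖z19 w - Complex.I‖

/-- The Forgács–Horváth–Palla expression
T₁ = (1/(2S⁵))·√((S+S₋)²−4)·((1/4)(4−(S−S₋)²)² + S²S₋² − 3(z+z̄)²). -/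
def T1 (w : ℂ) : ℝ :=
  (1 / (2 * (S19 w)^5)) * Real.sqrt ((S19 w + Sm19 w)^2 - 4) *
    ((1/4) * (4 - (S19 w - Sm19 w)^2)^2 + (S19 w)^2 * (Sm19 w)^2 -
      3 * ((z19 w + conj (z19 w)).re)^2)

/-- The Forgács–Horváth–Palla expression
T₂ = (1/(2S⁵))·√(4−(S−S₋)²)·((1/4)(4−(S+S₋)²)² + S²S₋² − 3(z+z̄)²). -/
def T2 (w : ℂ) : ℝ :=
  (1 / (2 * (S19 w)^5)) * Real.sqrt (4 - (S19 w - Sm19 w)^2) *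
    ((1/4) * (4 - (S19 w + Sm19 w)^2)^2 + (S19 w)^2 * (Sm19 w)^2 -
      3 * ((z19 w + conj (z19 w)).re)^2)

lemma cpow_half_eq (w : ℂ) (hw0 : w ≠ 0) (hb : 0 ≤ w.im) :
    w ^ ((1:ℂ)/2) = (Real.sqrt ((‖w‖ + w.re)/2) : ℂ) +
      (Real.sqrt ((‖w‖ - w.re)/2) : ℂ) * Complex.I := by
  set p := Real.sqrt ((‖w‖ + w.re)/2) with hpdef
  set q := Real.sqrt ((‖w‖ - w.re)/2) with hqdef
  have har := abs_le.mp (Complex.abs_re_le_norm w)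
  have h1 : 0 ≤ (‖w‖ + w.re)/2 := by linarith [har.1]
  have h2 : 0 ≤ (‖w‖ - w.re)/2 := by linarith [har.2]
  have hp2 : p^2 = (‖w‖ + w.re)/2 := Real.sq_sqrt h1
  have hq2 : q^2 = (‖w‖ - w.re)/2 := Real.sq_sqrt h2
  have hp0 : 0 ≤ p := Real.sqrt_nonneg _
  have hq0 : 0 ≤ q := Real.sqrt_nonneg _
  have hns : ‖w‖ ^ 2 = w.re^2 + w.im^2 := by
    rw [Complex.sq_norm, Complex.normSq_apply]; ring
  have hpq : p * q = w.im / 2 := by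
    rw [hpdef, hqdef, ← Real.sqrt_mul h1]
    have e : (‖w‖ + w.re)/2 * ((‖w‖ - w.re)/2) = (w.im/2)^2 := by
      nlinarith [hns]
    rw [e, Real.sqrt_sq (by linarith)]
  set u : ℂ := (p:ℂ) + (q:ℂ)*Complex.I with hu
  have hure : u.re = p := by simp [hu]
  have huim : u.im = q := by simp [hu]
  have hu2 : u^2 = w := by
    rw [Complex.ext_iff]
    constructor
    · simp [hu, pow_two, Complex.mul_re, Complex.add_re, Complex.add_im, Complex.mul_im]
      nlinarith [hp2, hq2]
    · simp [hu, pow_two, Complex.mul_re, Complex.add_re, Complex.add_im, Complex.mul_im]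
      nlinarith [hpq]
  set v : ℂ := w ^ ((1:ℂ)/2) with hv
  have hvdef : v = Complex.exp (Complex.log w * (1/2)) :=
    Complex.cpow_def_of_ne_zero hw0 _
  have hv2 : v^2 = w := by
    rw [hvdef, pow_two, ← Complex.exp_add,
      show Complex.log w * (1/2) + Complex.log w * (1/2) = Complex.log w by ring,
      Complex.exp_log hw0]
  have harg0 : 0 ≤ w.arg := Complex.arg_nonneg_iff.mpr hb
  have harg1 : w.arg ≤ Real.pi := Complex.arg_le_pi w
  have himv : (Complex.log w * (1/2)).im = w.arg / 2 := by
    simp [Complex.mul_im, Complex.log_im]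
    ring
  have hvre : 0 ≤ v.re := by
    rw [hvdef, Complex.exp_re, himv]
    have : 0 ≤ Real.cos (w.arg / 2) := by
      apply Real.cos_nonneg_of_mem_Icc
      constructor
      · linarith [Real.pi_pos]
      · linarith
    positivity
  have hvim : 0 ≤ v.im := by
    rw [hvdef, Complex.exp_im, himv]
    have : 0 ≤ Real.sin (w.arg / 2) := by
      apply Real.sin_nonneg_of_nonneg_of_le_pi <;> linarith [Real.pi_pos]
    positivity
  have hfac : (v - u) * (v + u) = 0 := by
    have : v^2 = u^2 := hv2.trans hu2.symm
    linear_combination this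
  rcases mul_eq_zero.mp hfac with h | h
  · exact sub_eq_zero.mp h
  · exfalso
    have hvu : v = -u := eq_neg_of_add_eq_zero_left h
    have hpz : p = 0 := by
      have : v.re = -p := by rw [hvu]; simp [hure]
      linarith [hvre, this ▸ hvre]
    have hqz : q = 0 := by
      have : v.im = -q := by rw [hvu]; simp [huim]
      linarith [hvim, this ▸ hvim]
    apply hw0
    rw [← hu2, hu, hpz, hqz]
    simp

/-- For w in the closed upper half-disc (punctured at 0, with w ≠ −1), setting
z = i(1−w)/(1+w), S = |z+i| and S₋ = |z−i|, one has S = 2/|1+w|, S₋ = |w|S, the radicands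
(S+S₋)²−4 and 4−(S−S₋)² are nonnegative, and the Forgács–Horváth–Palla expressions satisfy
T₁ = Im(w^{5/2}) and T₂ = Re(w^{5/2}) for the principal branch of w^{5/2}. -/
theorem fhp_T_identities (w : ℂ) (h1 : 0 < ‖w‖) (h2 : ‖w‖ ≤ 1)
    (h3 : 0 ≤ w.im) (h4 : w ≠ -1) :
    S19 w = 2 / ‖1 + w‖ ∧
    Sm19 w = ‖w‖ * S19 w ∧
    0 ≤ (S19 w + Sm19 w)^2 - 4 ∧
    0 ≤ 4 - (S19 w - Sm19 w)^2 ∧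
    T1 w = (w ^ ((5 : ℂ)/2)).im ∧
    T2 w = (w ^ ((5 : ℂ)/2)).re := by
  have hw0 : w ≠ 0 := by
    intro h; rw [h] at h1; simp at h1
  have hw1 : (1:ℂ) + w ≠ 0 := by
    intro h
    apply h4
    linear_combination h
  set a := w.re with hadef
  set b := w.im with hbdef
  set r := ‖w‖ with hrdef
  have hr2 : r^2 = a^2 + b^2 := by
    rw [hrdef, Complex.sq_norm, Complex.normSq_apply]; ring
  have harb := abs_le.mp (Complex.abs_re_le_norm w)
  have har : a ≤ r := harb.2
  have hna : -r ≤ a := harb.1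
  have hd : 0 < ‖1+w‖ := norm_pos_iff.mpr hw1
  set d := ‖1+w‖ with hddef
  have hdne : d ≠ 0 := hd.ne'
  have hd2 : d^2 = 1 + 2*a + r^2 := by
    rw [hddef, Complex.sq_norm, Complex.normSq_apply]
    simp only [Complex.add_re, Complex.add_im, Complex.one_re, Complex.one_im]
    linear_combination -hr2
  -- S and Sm
  have hz1 : z19 w + Complex.I = 2*Complex.I/(1+w) := by
    rw [z19]; field_simp; ring
  have hz2 : z19 w - Complex.I = -2*Complex.I*w/(1+w) := by
    rw [z19]; field_simp; ring
  have hS : S19 w = 2/d := by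
    rw [S19, hz1, norm_div, norm_mul]
    simp [hddef]
  have hSm : Sm19 w = 2*r/d := by
    rw [Sm19, hz2, norm_div, norm_mul, norm_mul]
    simp [hddef, hrdef]
  -- real part of z + conj z
  have hre : (z19 w + conj (z19 w)).re = 4*b/d^2 := by
    have h5 : z19 w = 2*Complex.I/(1+w) - Complex.I := by linear_combination hz1
    rw [Complex.add_re, Complex.conj_re, h5]
    rw [Complex.sub_re, Complex.div_re, ← Complex.sq_norm, ← hddef]
    simp [Complex.add_im]
    ring
  -- radicands
  have hrad1 : (S19 w + Sm19 w)^2 - 4 = 8*(r-a)/d^2 := by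
    rw [hS, hSm]
    field_simp
    linear_combination (-4 : ℝ)*hd2
  have hrad2 : 4 - (S19 w - Sm19 w)^2 = 8*(r+a)/d^2 := by
    rw [hS, hSm]
    field_simp
    linear_combination (4 : ℝ)*hd2
  have hnn1 : 0 ≤ (S19 w + Sm19 w)^2 - 4 := by
    rw [hrad1]
    apply div_nonneg (by linarith) (by positivity)
  have hnn2 : 0 ≤ 4 - (S19 w - Sm19 w)^2 := by
    rw [hrad2]
    apply div_nonneg (by linarith) (by positivity)
  -- sqrt quantities
  set p := Real.sqrt ((r+a)/2) with hpdef
  set q := Real.sqrt ((r-a)/2) with hqdef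
  have hp2 : p^2 = (r+a)/2 := Real.sq_sqrt (by linarith)
  have hq2 : q^2 = (r-a)/2 := Real.sq_sqrt (by linarith)
  have hqp : (r+a)*q = b*p := by
    have e1 : (r+a)*q = Real.sqrt ((r+a)^2*((r-a)/2)) := by
      rw [Real.sqrt_mul (sq_nonneg _), Real.sqrt_sq (by linarith), hqdef]
    have e2 : (r+a)^2*((r-a)/2) = b^2*((r+a)/2) := by
      linear_combination ((r+a)/2)*hr2
    rw [e1, e2, Real.sqrt_mul (sq_nonneg _), Real.sqrt_sq h3, hpdef]
  have hpq : (r-a)*p = b*q := by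
    have e1 : (r-a)*p = Real.sqrt ((r-a)^2*((r+a)/2)) := by
      rw [Real.sqrt_mul (sq_nonneg _), Real.sqrt_sq (by linarith), hpdef]
    have e2 : (r-a)^2*((r+a)/2) = b^2*((r-a)/2) := by
      linear_combination ((r-a)/2)*hr2
    rw [e1, e2, Real.sqrt_mul (sq_nonneg _), Real.sqrt_sq h3, hqdef]
  have hsq1 : Real.sqrt ((S19 w + Sm19 w)^2 - 4) = 4*q/d := by
    rw [hrad1, show (8*(r-a)/d^2 : ℝ) = (4/d)^2 * ((r-a)/2) by field_simp; ring,
      Real.sqrt_mul (by positivity), Real.sqrt_sq (by positivity), hqdef]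
    ring
  have hsq2 : Real.sqrt (4 - (S19 w - Sm19 w)^2) = 4*p/d := by
    rw [hrad2, show (8*(r+a)/d^2 : ℝ) = (4/d)^2 * ((r+a)/2) by field_simp; ring,
      Real.sqrt_mul (by positivity), Real.sqrt_sq (by positivity), hpdef]
    ring
  have hhalf := cpow_half_eq w hw0 h3
  have h52 : w ^ ((5:ℂ)/2) = w^2 * ((p:ℂ) + (q:ℂ)*Complex.I) := by
    rw [show (5:ℂ)/2 = 2 + 1/2 by norm_num, Complex.cpow_add _ _ hw0, hhalf]
    congr 1
    rw [show (2:ℂ) = ((2:ℕ):ℂ) by norm_num, Complex.cpow_natCast]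
  have him : (w ^ ((5:ℂ)/2)).im = (a^2-b^2)*q + (2*a*b)*p := by
    rw [h52]
    simp only [Complex.mul_im, Complex.mul_re, Complex.add_re, Complex.add_im,
      Complex.ofReal_re, Complex.ofReal_im, Complex.I_re, Complex.I_im, pow_two]
    ring
  have hre5 : (w ^ ((5:ℂ)/2)).re = (a^2-b^2)*p - (2*a*b)*q := by
    rw [h52]
    simp only [Complex.mul_im, Complex.mul_re, Complex.add_re, Complex.add_im,
      Complex.ofReal_re, Complex.ofReal_im, Complex.I_re, Complex.I_im, pow_two]
    ring
  have hrad1' : 4 - (S19 w + Sm19 w)^2 = -(8*(r-a)/d^2) := by linarith [hrad1]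
  refine ⟨hS, by rw [hS, hSm]; ring, hnn1, hnn2, ?_, ?_⟩
  · have hT1val : T1 w = q*((r+a)^2+r^2-3*b^2) := by
      rw [T1, hsq1, hrad2, hre, hS, hSm]
      field_simp
      ring
    rw [hT1val, him]
    linear_combination (2*a)*hqp + (2*q)*hr2
  · have hT2val : T2 w = p*((r-a)^2+r^2-3*b^2) := by
      rw [T2, hsq2, hrad1', hre, hS, hSm]
      field_simp
      ring
    rw [hT2val, hre5]
    linear_combination (-2*a)*hpq + (2*p)*hr2
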